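/- Let v ≥ 1 and let T be a v²×4 array such that T restricted to columns (2,3,4) is a VOA(U_{2,3}, v), and such that the uniform distribution (X1,X2,X3,X4) on the rows of T satisfies: X2 is a function of X1, and the entropy function of (X1,X2,X3,X4) equals a·r1 + b·r2 with r1 the rank function of Û^1_{2,5} and r2 that of the wheel matroid W^{12}_2. Then a + b = log v and a = (1/v)·Σ_{i=0}^{v-1} H(α_i), where for each i ∈ {0,…,v−1}, α_i is the integer partition of v recording the multiplicities with which the distinct values of column 1 co-occur with value i in column 2. -/

import Mathlib

open Finset
open scoped BigOperators
noncomputable section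

/-- Probability, under the pmf `p` on the rows, that the columns indexed by `A` of the
array `T` agree with their values on row `r`. -/
def colProb {R : Type*} [Fintype R] (p : R → ℝ) (T : R → Fin 4 → ℕ)
    (A : Finset (Fin 4)) (r : R) : ℝ :=
  ∑ s, if ∀ i ∈ A, T s i = T r i then p s else 0

/-- The Shannon entropy `H(X_A)` of the columns of `T` indexed by `A`, where the rows
carry the pmf `p`. -/
def colEntropy {R : Type*} [Fintype R] (p : R → ℝ) (T : R → Fin 4 → ℕ)
    (A : Finset (Fin 4)) : ℝ :=
  -∑ r, p r * Real.log (colProb p T A r)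

/-- `T` is a `VOA(U_{2,3}, v)`: a `v² × 3` array over an alphabet of size `v` in which
every ordered pair of symbols occurs exactly once in each pair of distinct columns
(a Latin square of order `v` in orthogonal-array form). -/
def IsVOA23 (v : ℕ) (T : Fin (v ^ 2) → Fin 3 → Fin v) : Prop :=
  ∀ j k : Fin 3, j ≠ k → ∀ a b : Fin v,
    (Finset.univ.filter (fun r => T r j = a ∧ T r k = b)).card = 1

/-- Combine a first column `c1` (alphabet `Fin t`) with a `v²×3` array `c` into a
`v²×4` array of naturals (column `0` is `c1`, columns `1,2,3` are those of `c`). -/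
def mkT {v t : ℕ} (c1 : Fin (v ^ 2) → Fin t) (c : Fin (v ^ 2) → Fin 3 → Fin v) :
    Fin (v ^ 2) → Fin 4 → ℕ := fun r i =>
  if i = 0 then (c1 r : ℕ)
  else (c r ⟨(i : ℕ) - 1, by have h := i.isLt; omega⟩ : ℕ)

/-- Rank function of `Û^1_{2,5}` (element `1` is index `0`). -/
def rU25hat1 (A : Finset (Fin 4)) : ℝ :=
  if A = {0} then 2 else min 2 (A.card : ℝ)

/-- Rank function of the wheel matroid `W^{12}_2`: elements `1,2` (indices `0,1`)
are parallel, and each of them forms a `U_{2,3}` with elements `3,4`. -/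
def rW12 (A : Finset (Fin 4)) : ℝ :=
  if A = ∅ then 0 else if A ⊆ ({0, 1} : Finset (Fin 4)) then 1 else min 2 (A.card : ℝ)

/-- Rank function of the wheel matroid `W^{13}_2`: elements `1,3` (indices `0,2`)
are parallel. -/
def rW13 (A : Finset (Fin 4)) : ℝ :=
  if A = ∅ then 0 else if A ⊆ ({0, 2} : Finset (Fin 4)) then 1 else min 2 (A.card : ℝ)

/-- Let `T` be a `v²×4` array whose columns `2,3,4` form a `VOA(U_{2,3}, v)` and such
that, under the uniform distribution on rows, column `2` is a function of column `1`
and the entropy function equals `a·r(Û^1_{2,5}) + b·r(W^{12}_2)`.  Then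
`a + b = log v` and `a = (1/v) Σ_i H(α_i)` where `α_i` records the multiplicities with
which the distinct values of column `1` co-occur with value `i` in column `2`. -/
theorem statement12 (v t : ℕ) (hv : 1 ≤ v)
    (c1 : Fin (v ^ 2) → Fin t) (c : Fin (v ^ 2) → Fin 3 → Fin v)
    (hVOA : IsVOA23 v c)
    (hfun : ∀ r r' : Fin (v ^ 2), c1 r = c1 r' → c r 0 = c r' 0)
    (a b : ℝ)
    (hEnt : ∀ A : Finset (Fin 4),
      colEntropy (fun _ => ((v ^ 2 : ℕ) : ℝ)⁻¹) (mkT c1 c) A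
        = a * rU25hat1 A + b * rW12 A) :
    a + b = Real.log v ∧
    a = (v : ℝ)⁻¹ * ∑ i : Fin v, (-∑ j : Fin t,
        (((Finset.univ.filter (fun r => c1 r = j ∧ c r 0 = i)).card : ℝ) / v) *
          Real.log (((Finset.univ.filter (fun r => c1 r = j ∧ c r 0 = i)).card : ℝ) / v)) := by

  classical
  have hvne : v ≠ 0 := by omega
  have hv0 : (v : ℝ) ≠ 0 := Nat.cast_ne_zero.mpr hvne
  have hv2 : ((v ^ 2 : ℕ) : ℝ) ≠ 0 := Nat.cast_ne_zero.mpr (by positivity)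
  set p : Fin (v ^ 2) → ℝ := fun _ => ((v ^ 2 : ℕ) : ℝ)⁻¹ with hp
  -- counting: each value of column c · 0 occurs exactly v times
  have hcount : ∀ val : Fin v, ((univ : Finset (Fin (v ^ 2))).filter
      (fun r => c r 0 = val)).card = v := by
    intro val
    rw [Finset.card_eq_sum_card_fiberwise (f := fun r => c r 1)
      (t := (univ : Finset (Fin v))) (fun x _ => mem_univ _)]
    have h1 : ∀ b : Fin v,
        (((univ : Finset (Fin (v ^ 2))).filter (fun r => c r 0 = val)).filter
          (fun r => c r 1 = b)).card = 1 := by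
      intro b
      rw [Finset.filter_filter]
      exact hVOA 0 1 (by decide) val b
    simp [h1]
  -- colProb on {1}
  have hprob1 : ∀ r, colProb p (mkT c1 c) {1} r = (v : ℝ)⁻¹ := by
    intro r
    have hiff : ∀ s, (∀ i ∈ ({1} : Finset (Fin 4)), mkT c1 c s i = mkT c1 c r i)
        ↔ c s 0 = c r 0 := by
      intro s
      simp only [Finset.mem_singleton, forall_eq, mkT]
      norm_num
      exact Fin.val_eq_val _ _
    unfold colProb
    calc (∑ s, if ∀ i ∈ ({1} : Finset (Fin 4)), mkT c1 c s i = mkT c1 c r i then p s else 0)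
        = ∑ s, if c s 0 = c r 0 then ((v ^ 2 : ℕ) : ℝ)⁻¹ else 0 := by
          refine Finset.sum_congr rfl fun s _ => by rw [if_congr (hiff s) rfl rfl]
      _ = ((univ.filter (fun s => c s 0 = c r 0)).card : ℝ) * ((v ^ 2 : ℕ) : ℝ)⁻¹ := by
          rw [← Finset.sum_filter, Finset.sum_const, nsmul_eq_mul]
      _ = (v : ℝ)⁻¹ := by
          rw [hcount]
          push_cast
          field_simp
  -- entropy on {1}
  have hH1 : colEntropy p (mkT c1 c) {1} = Real.log v := by
    unfold colEntropy
    have : ∀ r : Fin (v ^ 2), p r * Real.log (colProb p (mkT c1 c) {1} r)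
        = ((v ^ 2 : ℕ) : ℝ)⁻¹ * (-(Real.log v)) := by
      intro r; rw [hprob1, Real.log_inv, hp]
    rw [Finset.sum_congr rfl (fun r _ => this r), Finset.sum_const, nsmul_eq_mul]
    simp only [Fintype.card_fin, Finset.card_univ]
    field_simp
  -- the counts
  set Nn : Fin t → Fin v → ℕ := fun j i =>
    ((univ : Finset (Fin (v ^ 2))).filter (fun r => c1 r = j ∧ c r 0 = i)).card with hNn
  -- colProb on {0,1}
  have hprob01 : ∀ r, colProb p (mkT c1 c) {0, 1} r
      = (Nn (c1 r) (c r 0) : ℝ) * ((v ^ 2 : ℕ) : ℝ)⁻¹ := by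
    intro r
    have hiff : ∀ s, (∀ i ∈ ({0, 1} : Finset (Fin 4)), mkT c1 c s i = mkT c1 c r i)
        ↔ (c1 s = c1 r ∧ c s 0 = c r 0) := by
      intro s
      simp only [Finset.mem_insert, Finset.mem_singleton, forall_eq_or_imp, forall_eq, mkT]
      norm_num
      rw [Fin.val_eq_val, Fin.val_eq_val]
    unfold colProb
    calc (∑ s, if ∀ i ∈ ({0, 1} : Finset (Fin 4)), mkT c1 c s i = mkT c1 c r i then p s else 0)
        = ∑ s, if c1 s = c1 r ∧ c s 0 = c r 0 then ((v ^ 2 : ℕ) : ℝ)⁻¹ else 0 := by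
          refine Finset.sum_congr rfl fun s _ => by rw [if_congr (hiff s) rfl rfl]
      _ = ((univ.filter (fun s => c1 s = c1 r ∧ c s 0 = c r 0)).card : ℝ)
            * ((v ^ 2 : ℕ) : ℝ)⁻¹ := by
          rw [← Finset.sum_filter, Finset.sum_const, nsmul_eq_mul]
      _ = (Nn (c1 r) (c r 0) : ℝ) * ((v ^ 2 : ℕ) : ℝ)⁻¹ := rfl
  -- entropy on {0,1}
  have hH01 : colEntropy p (mkT c1 c) {0, 1}
      = -∑ ji : Fin t × Fin v, (Nn ji.1 ji.2 : ℝ) * (((v ^ 2 : ℕ) : ℝ)⁻¹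
          * Real.log ((Nn ji.1 ji.2 : ℝ) * ((v ^ 2 : ℕ) : ℝ)⁻¹)) := by
    unfold colEntropy
    congr 1
    have hsum : ∀ r : Fin (v ^ 2), p r * Real.log (colProb p (mkT c1 c) {0, 1} r)
        = (fun ji : Fin t × Fin v => ((v ^ 2 : ℕ) : ℝ)⁻¹
            * Real.log ((Nn ji.1 ji.2 : ℝ) * ((v ^ 2 : ℕ) : ℝ)⁻¹)) (c1 r, c r 0) := by
      intro r; rw [hprob01, hp]
    rw [Finset.sum_congr rfl (fun r _ => hsum r),
      ← Finset.sum_fiberwise (univ : Finset (Fin (v ^ 2)))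
        (fun r => ((c1 r, c r 0) : Fin t × Fin v))
        (fun r => (fun ji : Fin t × Fin v => ((v ^ 2 : ℕ) : ℝ)⁻¹
            * Real.log ((Nn ji.1 ji.2 : ℝ) * ((v ^ 2 : ℕ) : ℝ)⁻¹)) (c1 r, c r 0))]
    refine Finset.sum_congr rfl fun ji _ => ?_
    have hfib : (univ.filter (fun r => ((c1 r, c r 0) : Fin t × Fin v) = ji))
        = univ.filter (fun r => c1 r = ji.1 ∧ c r 0 = ji.2) := by
      apply Finset.filter_congr
      intro r _
      simp [Prod.ext_iff]
    calc ∑ r ∈ univ.filter (fun r => ((c1 r, c r 0) : Fin t × Fin v) = ji),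
          (fun ji : Fin t × Fin v => ((v ^ 2 : ℕ) : ℝ)⁻¹
            * Real.log ((Nn ji.1 ji.2 : ℝ) * ((v ^ 2 : ℕ) : ℝ)⁻¹)) (c1 r, c r 0)
        = ∑ r ∈ univ.filter (fun r => ((c1 r, c r 0) : Fin t × Fin v) = ji),
            ((v ^ 2 : ℕ) : ℝ)⁻¹ * Real.log ((Nn ji.1 ji.2 : ℝ) * ((v ^ 2 : ℕ) : ℝ)⁻¹) := by
          refine Finset.sum_congr rfl fun r hr => ?_
          rw [Finset.mem_filter] at hr
          rw [hr.2]
      _ = (Nn ji.1 ji.2 : ℝ) * (((v ^ 2 : ℕ) : ℝ)⁻¹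
            * Real.log ((Nn ji.1 ji.2 : ℝ) * ((v ^ 2 : ℕ) : ℝ)⁻¹)) := by
          rw [Finset.sum_const, nsmul_eq_mul, hfib]
  -- total count
  have hNtot : ∑ ji : Fin t × Fin v, Nn ji.1 ji.2 = v ^ 2 := by
    have := Finset.card_eq_sum_card_fiberwise
      (s := (univ : Finset (Fin (v ^ 2)))) (t := (univ : Finset (Fin t × Fin v)))
      (f := fun r => ((c1 r, c r 0) : Fin t × Fin v)) (fun x _ => mem_univ _)
    simp only [Finset.card_univ, Fintype.card_fin] at this
    rw [this]
    refine Finset.sum_congr rfl fun ji _ => ?_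
    simp only [hNn]
    congr 1
    apply Finset.filter_congr
    intro r _
    simp [Prod.ext_iff]
  -- rank values
  have hr1_1 : rU25hat1 {1} = 1 := by
    rw [rU25hat1]
    rw [if_neg (by decide)]
    norm_num
  have hrW_1 : rW12 {1} = 1 := by
    rw [rW12, if_neg (by decide), if_pos (by decide)]
  have hr1_01 : rU25hat1 {0, 1} = 2 := by
    rw [rU25hat1, if_neg (by decide)]
    norm_num [Finset.card_insert_of_notMem]
  have hrW_01 : rW12 {0, 1} = 1 := by
    rw [rW12, if_neg (by decide), if_pos (by decide)]
  have hab : a + b = Real.log v := by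
    have h := hEnt {1}
    rw [hH1, hr1_1, hrW_1] at h
    linarith
  refine ⟨hab, ?_⟩
  have ha : a = colEntropy p (mkT c1 c) {0, 1} - Real.log v := by
    have h := hEnt {0, 1}
    rw [hr1_01, hrW_01] at h
    rw [h]; linarith
  rw [ha, hH01]
  -- rewrite log v as a sum
  have hlogv : Real.log v = ∑ ji : Fin t × Fin v,
      (Nn ji.1 ji.2 : ℝ) * ((v ^ 2 : ℕ) : ℝ)⁻¹ * Real.log v := by
    rw [← Finset.sum_mul, ← Finset.sum_mul]
    have : (∑ ji : Fin t × Fin v, (Nn ji.1 ji.2 : ℝ)) = ((v ^ 2 : ℕ) : ℝ) := by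
      rw [← Nat.cast_sum]
      exact_mod_cast congrArg (Nat.cast : ℕ → ℝ) hNtot
    rw [this]
    field_simp
  -- termwise identity
  have key : ∀ (j : Fin t) (i : Fin v),
      (Nn j i : ℝ) * (((v ^ 2 : ℕ) : ℝ)⁻¹ * Real.log ((Nn j i : ℝ) * ((v ^ 2 : ℕ) : ℝ)⁻¹))
        + (Nn j i : ℝ) * ((v ^ 2 : ℕ) : ℝ)⁻¹ * Real.log v
      = (v : ℝ)⁻¹ * (((Nn j i : ℝ) / v) * Real.log ((Nn j i : ℝ) / v)) := by
    intro j i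
    rcases Nat.eq_zero_or_pos (Nn j i) with h0 | hpos
    · simp [h0]
    · have hN : (Nn j i : ℝ) ≠ 0 := Nat.cast_ne_zero.mpr (by omega)
      have hv2' : ((v ^ 2 : ℕ) : ℝ) = (v : ℝ) * v := by push_cast; ring
      rw [hv2', Real.log_mul hN (inv_ne_zero (mul_ne_zero hv0 hv0)), Real.log_inv,
        Real.log_mul hv0 hv0, Real.log_div hN hv0]
      field_simp
      ring
  have lhs_eq : (-∑ ji : Fin t × Fin v, (Nn ji.1 ji.2 : ℝ) * (((v ^ 2 : ℕ) : ℝ)⁻¹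
          * Real.log ((Nn ji.1 ji.2 : ℝ) * ((v ^ 2 : ℕ) : ℝ)⁻¹))) - Real.log v
      = -∑ ji : Fin t × Fin v,
          ((Nn ji.1 ji.2 : ℝ) * (((v ^ 2 : ℕ) : ℝ)⁻¹
            * Real.log ((Nn ji.1 ji.2 : ℝ) * ((v ^ 2 : ℕ) : ℝ)⁻¹))
          + (Nn ji.1 ji.2 : ℝ) * ((v ^ 2 : ℕ) : ℝ)⁻¹ * Real.log v) := by
    rw [Finset.sum_add_distrib, ← hlogv]
    ring
  rw [lhs_eq, Finset.sum_congr rfl (fun ji _ => key ji.1 ji.2), Fintype.sum_prod_type,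
    Finset.sum_comm, Finset.mul_sum]
  rw [← Finset.sum_neg_distrib]
  refine Finset.sum_congr rfl fun i _ => ?_
  rw [mul_neg, Finset.mul_sum]
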